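/- Let n ≥ 3 and let 𝔪 be the Lie subalgebra of the Clifford algebra C(ℝ^n, q) generated by v_1v_2v_3 and by the elements v_i v_{i+1} for 1 ≤ i < n. Then 𝔪 contains every product v_{j_1} v_{j_2} ⋯ v_{j_k} with pairwise distinct indices j_t ∈ {1,…,n} and 2 ≤ k ≤ n with k ≡ 2 or 3 (mod 4), with the possible exception of v_1 v_2 ⋯ v_n, and this exception can only occur when n ≡ 3 (mod 4). -/

import Mathlib

open QuadraticMap CliffordAlgebra

attribute [local instance 100] LieRing.ofAssociativeRing

/-- The standard positive definite quadratic form `q = x₁² + ⋯ + xₙ²` on `ℝⁿ`. -/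
noncomputable def stdForm (n : ℕ) : QuadraticForm ℝ (Fin n → ℝ) :=
  QuadraticMap.weightedSumSquares ℝ (fun _ : Fin n => (1 : ℝ))

/-- The images `v i` of the standard basis vectors in the Clifford algebra `C(ℝⁿ, q)`. -/
noncomputable def cliffordGen (n : ℕ) (i : Fin n) : CliffordAlgebra (stdForm n) :=
  CliffordAlgebra.ι (stdForm n) (Pi.single i 1)

/-- The Lie subalgebra `𝔪` of `C(ℝⁿ, q)` generated by `v₁v₂v₃` and the `vᵢvᵢ₊₁`. -/
noncomputable def lieM (n : ℕ) (hn : 3 ≤ n) : LieSubalgebra ℝ (CliffordAlgebra (stdForm n)) :=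
  LieSubalgebra.lieSpan ℝ _
    (insert (cliffordGen n ⟨0, by omega⟩ * cliffordGen n ⟨1, by omega⟩ *
        cliffordGen n ⟨2, by omega⟩)
      {x | ∃ i : ℕ, ∃ h : i + 1 < n,
        x = cliffordGen n ⟨i, by omega⟩ * cliffordGen n ⟨i + 1, h⟩})

lemma v_sq {n : ℕ} (i : Fin n) : cliffordGen n i * cliffordGen n i = 1 := by
  rw [cliffordGen, ι_sq_scalar]
  have : stdForm n (Pi.single i 1) = 1 := by
    simp [stdForm, weightedSumSquares_apply, Pi.single_apply]
  rw [this, map_one]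

lemma v_anti {n : ℕ} {i j : Fin n} (h : i ≠ j) :
    cliffordGen n i * cliffordGen n j = -(cliffordGen n j * cliffordGen n i) := by
  have H := CliffordAlgebra.ι_mul_ι_add_swap (Q := stdForm n) (Pi.single i 1) (Pi.single j 1)
  have hp : QuadraticMap.polar (stdForm n) (Pi.single i 1) (Pi.single j 1) = 0 := by
    rw [QuadraticMap.polar]
    simp only [stdForm, weightedSumSquares_apply, smul_eq_mul, one_mul, Pi.add_apply,
      ← Finset.sum_sub_distrib]
    apply Finset.sum_eq_zero
    intro t _
    rcases eq_or_ne t i with rfl | hi <;> rcases eq_or_ne t j with rfl | hj <;>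
      simp_all [Pi.single_apply] <;> ring
  rw [hp, map_zero] at H
  rw [cliffordGen, cliffordGen]
  have := eq_neg_of_add_eq_zero_left H
  exact this

noncomputable def blade (n : ℕ) (l : List (Fin n)) : CliffordAlgebra (stdForm n) :=
  (l.map (cliffordGen n)).prod

lemma blade_nil {n : ℕ} : blade n [] = 1 := rfl

lemma blade_cons {n : ℕ} (a : Fin n) (l : List (Fin n)) :
    blade n (a :: l) = cliffordGen n a * blade n l := by
  simp [blade]

lemma blade_append {n : ℕ} (l₁ l₂ : List (Fin n)) :
    blade n (l₁ ++ l₂) = blade n l₁ * blade n l₂ := by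
  simp [blade]

lemma blade_move {n : ℕ} {a : Fin n} : ∀ {l : List (Fin n)}, a ∉ l →
    blade n l * cliffordGen n a = ((-1 : ℝ) ^ l.length) • (cliffordGen n a * blade n l)
  | [], _ => by simp [blade_nil]
  | x :: t, h => by
    have hx : x ≠ a := fun e => h (e ▸ List.mem_cons_self (a := x) (l := t))
    have ht : a ∉ t := fun e => h (List.mem_cons_of_mem _ e)
    rw [blade_cons, mul_assoc, blade_move ht, mul_smul_comm, ← mul_assoc,
      v_anti hx, List.length_cons, pow_succ]
    rw [neg_mul_comm, mul_smul, neg_one_smul, mul_neg, mul_assoc]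

lemma blade_comm {n : ℕ} : ∀ (l₁ : List (Fin n)) (l₂ : List (Fin n)),
    (∀ x ∈ l₁, x ∉ l₂) →
    blade n l₂ * blade n l₁ = ((-1 : ℝ) ^ (l₁.length * l₂.length)) • (blade n l₁ * blade n l₂)
  | [], l₂, _ => by simp [blade_nil]
  | a :: t, l₂, h => by
    have ha : a ∉ l₂ := h a (List.mem_cons_self (a := a) (l := t))
    have ht : ∀ x ∈ t, x ∉ l₂ := fun x hx => h x (List.mem_cons_of_mem _ hx)
    rw [blade_cons, ← mul_assoc, blade_move ha, smul_mul_assoc, mul_assoc,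
      blade_comm t l₂ ht, mul_smul_comm, smul_smul, ← pow_add, ← mul_assoc, ← blade_cons]
    congr 2
    · rw [List.length_cons]; ring

lemma blade_pair {n : ℕ} (a b : Fin n) :
    blade n [a, b] = cliffordGen n a * cliffordGen n b := by
  simp [blade]

lemma swap_head {n : ℕ} {a b : Fin n} {t : List (Fin n)} (hab : a ≠ b)
    (ha : a ∉ t) (hb : b ∉ t) :
    ⁅blade n [a, b], blade n (b :: t)⁆ = (2 : ℝ) • blade n (a :: t) := by
  have hsq : ((-1 : ℝ)) ^ (t.length + t.length) = 1 := by
    rw [← two_mul]; exact Even.neg_one_pow ⟨t.length, two_mul t.length ▸ rfl⟩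
  have h1 : blade n [a, b] * blade n (b :: t) = blade n (a :: t) := by
    rw [blade_pair, blade_cons, blade_cons, mul_assoc, ← mul_assoc (cliffordGen n b), v_sq,
      one_mul]
  have h2 : blade n (b :: t) * blade n [a, b] = -blade n (a :: t) := by
    rw [blade_pair, blade_cons, mul_assoc, ← mul_assoc (blade n t), blade_move ha,
      smul_mul_assoc, mul_smul_comm, mul_assoc (cliffordGen n a), blade_move hb,
      mul_smul_comm, mul_smul_comm, smul_smul, ← pow_add, hsq, one_smul,
      ← mul_assoc (cliffordGen n b), v_anti (Ne.symm hab), neg_mul, mul_assoc,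
      ← mul_assoc (cliffordGen n b), v_sq, one_mul, ← blade_cons]
  rw [Ring.lie_def, h1, h2, sub_neg_eq_add, two_smul]
lemma bracket_disjoint_odd {n : ℕ} {l₁ l₂ : List (Fin n)} (h : ∀ x ∈ l₁, x ∉ l₂)
    (h₁ : Odd l₁.length) (h₂ : Odd l₂.length) :
    ⁅blade n l₁, blade n l₂⁆ = (2 : ℝ) • blade n (l₁ ++ l₂) := by
  have hc := blade_comm l₁ l₂ h
  have : ((-1 : ℝ)) ^ (l₁.length * l₂.length) = -1 := Odd.neg_one_pow (h₁.mul h₂)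
  rw [this, neg_one_smul] at hc
  rw [Ring.lie_def, hc, sub_neg_eq_add, blade_append, two_smul]

lemma blade_three {n : ℕ} (a b c : Fin n) :
    blade n [a, b, c] = cliffordGen n a * (cliffordGen n b * cliffordGen n c) := by
  simp [blade]

lemma swap3 {n : ℕ} {a b d : Fin n} {t : List (Fin n)} (hab : a ≠ b) (had : a ≠ d)
    (hbd : b ≠ d) (ha : a ∉ t) (hb : b ∉ t) (hd : d ∉ t) (hodd : Odd t.length) :
    ⁅blade n [a, b, d], blade n (d :: t)⁆ = (2 : ℝ) • blade n (a :: b :: t) := by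
  set A := cliffordGen n a
  set B := cliffordGen n b
  set D := cliffordGen n d
  set T := blade n t
  have hDU : D * (A * (B * D)) = A * B := by
    rw [← mul_assoc D A, v_anti (Ne.symm had), neg_mul, mul_assoc A D, ← mul_assoc D B,
      v_anti (Ne.symm hbd), neg_mul, mul_neg, mul_assoc B D D, v_sq, mul_one, neg_neg]
  have h1 : blade n [a, b, d] * blade n (d :: t) = blade n (a :: b :: t) := by
    rw [blade_three, blade_cons d t, blade_cons a (b :: t), blade_cons b t, mul_assoc A (B*D),
      mul_assoc B D, ← mul_assoc D D, v_sq, one_mul]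
  have hodd3 : Odd ([a, b, d].length * t.length) := by
    obtain ⟨c, hc⟩ := hodd
    exact ⟨3 * c + 1, by simp [hc]; ring⟩
  have hcomm : T * (A * (B * D)) = -((A * (B * D)) * T) := by
    have h3 := blade_comm [a, b, d] t (by
      intro x hx
      simp only [List.mem_cons, List.not_mem_nil, or_false] at hx
      rcases hx with rfl | rfl | rfl <;> assumption)
    rw [Odd.neg_one_pow hodd3, neg_one_smul, blade_three] at h3
    exact h3
  have h2 : blade n (d :: t) * blade n [a, b, d] = -blade n (a :: b :: t) := by
    rw [blade_three, blade_cons d t, blade_cons a (b :: t), blade_cons b t, mul_assoc D T,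
      hcomm, mul_neg, ← mul_assoc D, hDU, mul_assoc]
  rw [Ring.lie_def, h1, h2, sub_neg_eq_add, two_smul]

lemma blade_perm {n : ℕ} {l l' : List (Fin n)} (h : l.Perm l') (hd : l.Nodup) :
    blade n l = blade n l' ∨ blade n l = -blade n l' := by
  induction h with
  | nil => exact Or.inl rfl
  | cons x h ih =>
    rcases ih (List.Nodup.of_cons hd) with h' | h'
    · exact Or.inl (by rw [blade_cons, blade_cons, h'])
    · exact Or.inr (by rw [blade_cons, blade_cons, h', mul_neg])
  | swap x y l =>
    have hxy : y ≠ x := by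
      intro e; exact (List.nodup_cons.mp hd).1 (e ▸ List.mem_cons_self (a := x) (l := l))
    right
    rw [blade_cons, blade_cons, blade_cons, blade_cons, ← mul_assoc, ← mul_assoc,
      v_anti hxy, neg_mul]
  | trans h1 h2 ih1 ih2 =>
    have hd2 := h1.nodup_iff.mp hd
    rcases ih1 hd with h' | h' <;> rcases ih2 hd2 with h'' | h''
    · exact Or.inl (h'.trans h'')
    · exact Or.inr (h'.trans h'')
    · exact Or.inr (by rw [h', h''])
    · exact Or.inl (by rw [h', h'', neg_neg])

variable {n : ℕ} {hn : 3 ≤ n}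

lemma neg_mem_lieM {x : CliffordAlgebra (stdForm n)} (h : x ∈ lieM n hn) :
    -x ∈ lieM n hn := by
  have := (lieM n hn).smul_mem (-1 : ℝ) h
  simpa using this

lemma half_mem {x : CliffordAlgebra (stdForm n)} (h : (2 : ℝ) • x ∈ lieM n hn) :
    x ∈ lieM n hn := by
  have := (lieM n hn).smul_mem ((2 : ℝ)⁻¹) h
  rwa [smul_smul, inv_mul_cancel₀ two_ne_zero, one_smul] at this

lemma blade_mem_congr {l l' : List (Fin n)} (h : l.Perm l') (hd : l.Nodup) :
    blade n l ∈ lieM n hn ↔ blade n l' ∈ lieM n hn := by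
  rcases blade_perm h hd with h' | h'
  · rw [h']
  · rw [h']
    constructor
    · intro hm; simpa using neg_mem_lieM hm
    · exact neg_mem_lieM

lemma gen_pair_mem (i : ℕ) (h : i + 1 < n) :
    blade n [⟨i, by omega⟩, ⟨i + 1, h⟩] ∈ lieM n hn := by
  apply LieSubalgebra.subset_lieSpan
  right
  exact ⟨i, h, by rw [blade_pair]⟩

lemma gen_tri_mem :
    blade n [⟨0, by omega⟩, ⟨1, by omega⟩, ⟨2, by omega⟩] ∈ lieM n hn := by
  apply LieSubalgebra.subset_lieSpan
  left
  rw [blade_three, mul_assoc]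


lemma two_mem_lt : ∀ (bv : ℕ) (a b : Fin n), b.val = bv → a < b →
    blade n [a, b] ∈ lieM n hn := by
  intro bv
  induction bv using Nat.strong_induction_on with
  | _ bv ih =>
    intro a b hbv hab
    rcases Nat.lt_or_ge (a.val + 1) b.val with h | h
    · have hb1 : b.val - 1 < n := by omega
      set c : Fin n := ⟨b.val - 1, hb1⟩ with hc
      have hac : a < c := by
        rw [Fin.lt_def] at hab ⊢; simp [hc]; omega
      have h1 : blade n [a, c] ∈ lieM n hn := ih (b.val - 1) (by omega) a c rfl hac
      have h2 : blade n [c, b] ∈ lieM n hn := by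
        have hlt : (b.val - 1) + 1 < n := by omega
        have := gen_pair_mem (hn := hn) (b.val - 1) hlt
        have e1 : (⟨b.val - 1, by omega⟩ : Fin n) = c := rfl
        have e2 : (⟨(b.val - 1) + 1, hlt⟩ : Fin n) = b := by
          apply Fin.ext; simp; omega
        rwa [e1, e2] at this
      have hbr := (lieM n hn).lie_mem h1 h2
      have hac' : a ≠ c := Fin.ne_of_lt hac
      have hab' : a ≠ b := Fin.ne_of_lt hab
      have hcb : c ≠ b := by
        intro e; rw [Fin.ext_iff] at e; simp [hc] at e; omega
      have hs := swap_head (t := [b]) hac' (by simp [hab']) (by simp [hcb])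
      rw [show (c :: [b]) = [c, b] from rfl] at hs
      rw [hs] at hbr
      exact half_mem hbr
    · have hba : b.val = a.val + 1 := by
        rw [Fin.lt_def] at hab; omega
      have hlt : a.val + 1 < n := by omega
      have := gen_pair_mem (hn := hn) a.val hlt
      have e1 : (⟨a.val, by omega⟩ : Fin n) = a := rfl
      have e2 : (⟨a.val + 1, hlt⟩ : Fin n) = b := by apply Fin.ext; simp; omega
      rwa [e1, e2] at this

lemma two_mem {a b : Fin n} (h : a ≠ b) : blade n [a, b] ∈ lieM n hn := by
  rcases lt_or_gt_of_ne h with hlt | hgt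
  · exact two_mem_lt b.val a b rfl hlt
  · have := two_mem_lt (hn := hn) a.val b a rfl hgt
    have e : blade n [a, b] = -blade n [b, a] := by
      rw [blade_pair, blade_pair, v_anti h]
    rw [e]
    exact neg_mem_lieM this

lemma replace_head {x x' : Fin n} {t : List (Fin n)} (hx' : x' ∉ t) (hx : x ∉ t)
    (h : blade n (x :: t) ∈ lieM n hn) : blade n (x' :: t) ∈ lieM n hn := by
  rcases eq_or_ne x' x with rfl | hne
  · exact h
  · have hbr := (lieM n hn).lie_mem (two_mem (hn := hn) hne) h
    rw [swap_head hne hx' hx] at hbr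
    exact half_mem hbr

/-- membership predicate for finsets -/
def P (hn : 3 ≤ n) (s : Finset (Fin n)) : Prop := blade n s.toList ∈ lieM n hn

lemma bridge {l : List (Fin n)} (hd : l.Nodup) :
    blade n l ∈ lieM n hn ↔ P hn l.toFinset := by
  have hperm : l.toFinset.toList.Perm l := by
    rw [List.perm_ext_iff_of_nodup (Finset.nodup_toList _) hd]
    intro a
    rw [Finset.mem_toList, List.mem_toFinset]
  unfold P
  exact blade_mem_congr hperm.symm hd

lemma replace_finset {s : Finset (Fin n)} {x y : Fin n} (hP : P hn s) (hy : y ∉ s)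
    (hx : x ∈ s) : P hn (insert y (s.erase x)) := by
  set t := (s.erase x).toList with ht
  have htn : t.Nodup := Finset.nodup_toList _
  have hxt : x ∉ t := by simp [ht, Finset.mem_toList]
  have hyt : y ∉ t := by
    simp only [ht, Finset.mem_toList, Finset.mem_erase]
    exact fun h => hy h.2
  have h1 : blade n (x :: t) ∈ lieM n hn := by
    rw [bridge (by exact List.nodup_cons.mpr ⟨hxt, htn⟩)]
    have : (x :: t).toFinset = s := by
      simp only [List.toFinset_cons, ht, Finset.toList_toFinset]
      exact Finset.insert_erase hx
    rwa [this]
  have h2 := replace_head (hn := hn) hyt hxt h1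
  rw [bridge (by exact List.nodup_cons.mpr ⟨hyt, htn⟩)] at h2
  have : (y :: t).toFinset = insert y (s.erase x) := by
    simp only [List.toFinset_cons, ht, Finset.toList_toFinset]
  rwa [this] at h2

lemma conn : ∀ (d : ℕ) (s t : Finset (Fin n)), (s \ t).card = d → s.card = t.card →
    P hn t → P hn s := by
  intro d
  induction d using Nat.strong_induction_on with
  | _ d ih =>
    intro s t hd hcard hPt
    rcases Nat.eq_zero_or_pos d with rfl | hpos
    · have hsub : s ⊆ t := by
        rw [← Finset.sdiff_eq_empty_iff_subset]
        exact Finset.card_eq_zero.mp hd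
      have : s = t := Finset.eq_of_subset_of_card_le hsub (le_of_eq hcard.symm)
      rwa [this]
    · have hne : (s \ t).Nonempty := Finset.card_pos.mp (by omega)
      obtain ⟨y, hy⟩ := hne
      have hne' : (t \ s).Nonempty := by
        rw [← Finset.card_pos, Finset.card_sdiff_comm hcard.symm]
        omega
      obtain ⟨x, hx⟩ := hne'
      rw [Finset.mem_sdiff] at hx hy
      have hPt' : P hn (insert y (t.erase x)) := replace_finset hPt hy.2 hx.1
      have hcard' : s.card = (insert y (t.erase x)).card := by
        rw [Finset.card_insert_of_notMem (by simp [hy.2]), Finset.card_erase_of_mem hx.1]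
        have : 1 ≤ t.card := Finset.card_pos.mpr ⟨x, hx.1⟩
        omega
      have hsd : s \ (insert y (t.erase x)) = (s \ t).erase y := by
        have hxs := hx.2
        ext z
        by_cases hzx : z = x
        · subst hzx
          simp only [Finset.mem_sdiff, Finset.mem_insert, Finset.mem_erase]
          tauto
        · simp only [Finset.mem_sdiff, Finset.mem_insert, Finset.mem_erase]
          tauto
      have hdlt : ((s \ (insert y (t.erase x))).card) < d := by
        rw [hsd, Finset.card_erase_of_mem (by rw [Finset.mem_sdiff]; exact hy)]
        omega
      exact ih _ hdlt s _ rfl hcard' hPt'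


lemma three_mem {l : List (Fin n)} (hd : l.Nodup) (hl : l.length = 3) :
    blade n l ∈ lieM n hn := by
  have hn' := hn
  rw [bridge hd]
  have hbase : P hn ({⟨0, by omega⟩, ⟨1, by omega⟩, ⟨2, by omega⟩} : Finset (Fin n)) := by
    have hmem := gen_tri_mem (hn := hn)
    have hnd : ([⟨0, by omega⟩, ⟨1, by omega⟩, ⟨2, by omega⟩] : List (Fin n)).Nodup := by
      simp [Fin.ext_iff]
    rw [bridge hnd] at hmem
    simpa using hmem
  have hcardb : ({⟨0, by omega⟩, ⟨1, by omega⟩, ⟨2, by omega⟩} : Finset (Fin n)).card = 3 := by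
    rw [Finset.card_insert_of_notMem (by simp [Fin.ext_iff]),
      Finset.card_insert_of_notMem (by simp [Fin.ext_iff]), Finset.card_singleton]
  exact conn _ l.toFinset _ rfl
    (by rw [List.toFinset_card_of_nodup hd, hl, hcardb]) hbase

lemma main_mem : ∀ (k : ℕ) (l : List (Fin n)), l.Nodup → l.length = k → 2 ≤ k → k ≤ n →
    (k % 4 = 2 ∨ k % 4 = 3) → (k = n → n % 4 ≠ 3) → blade n l ∈ lieM n hn := by
  intro k
  induction k using Nat.strong_induction_on with
  | _ k ih =>
    intro l hd hl hk2 hkn hkmod hexc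
    by_cases hk3 : k ≤ 3
    · have : k = 2 ∨ k = 3 := by omega
      rcases this with rfl | rfl
      · obtain ⟨a, b, rfl⟩ := List.length_eq_two.mp hl
        have hab : a ≠ b := by simp at hd; exact hd
        exact two_mem hab
      · exact three_mem hd hl
    · push_neg at hk3
      rcases hkmod with hmod | hmod
      · -- k % 4 = 2, k ≥ 6
        have hk6 : 6 ≤ k := by omega
        have hsplit : l = l.take 3 ++ l.drop 3 := (List.take_append_drop 3 l).symm
        rw [hsplit, List.nodup_append] at hd
        obtain ⟨hd1, hd2, hdisj⟩ := hd
        have hlen1 : (l.take 3).length = 3 := by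
          rw [List.length_take, hl]; omega
        have hlen2 : (l.drop 3).length = k - 3 := by
          rw [List.length_drop, hl]
        have h1 : blade n (l.take 3) ∈ lieM n hn := three_mem hd1 hlen1
        have h2 : blade n (l.drop 3) ∈ lieM n hn := by
          apply ih (k - 3) (by omega) _ hd2 hlen2 (by omega) (by omega) (by omega) (by omega)
        have hbr := (lieM n hn).lie_mem h1 h2
        rw [bracket_disjoint_odd (fun x hx hx2 => hdisj x hx x hx2 rfl) (by rw [hlen1]; exact ⟨1, rfl⟩)
          (by rw [hlen2]; rw [Nat.odd_iff]; omega)] at hbr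
        rw [hsplit]
        exact half_mem hbr
      · -- k % 4 = 3, k ≥ 7
        have hk7 : 7 ≤ k := by omega
        have hklt : k < n := by
          rcases Nat.lt_or_ge k n with h | h
          · exact h
          · exact absurd hmod (by have := hexc (le_antisymm hkn h); omega)
        obtain ⟨d, hdl⟩ : ∃ d : Fin n, d ∉ l := by
          by_contra hcon
          push_neg at hcon
          have hsub : Finset.univ ⊆ l.toFinset := fun z _ => List.mem_toFinset.mpr (hcon z)
          have := Finset.card_le_card hsub
          rw [List.toFinset_card_of_nodup hd, hl, Finset.card_univ, Fintype.card_fin] at this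
          omega
        rcases l with _ | ⟨x, _ | ⟨y, t⟩⟩
        · simp at hl; omega
        · simp at hl; omega
        · simp only [List.nodup_cons, List.mem_cons] at hd
          obtain ⟨hx, hy, htn⟩ := hd
          push_neg at hx
          simp only [List.mem_cons, not_or] at hdl
          obtain ⟨hdx, hdy, hdt⟩ := hdl
          have hlt : t.length = k - 2 := by simp at hl; omega
          have h3 : blade n [x, y, d] ∈ lieM n hn := by
            apply three_mem _ (by rfl)
            simp [hx.1, Ne.symm hdx, Ne.symm hdy]
          have h2 : blade n (d :: t) ∈ lieM n hn := by
            apply ih (k - 1) (by omega) _ (List.nodup_cons.mpr ⟨hdt, htn⟩)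
              (by simp [hlt]; omega) (by omega) (by omega) (by omega) (by omega)
          have hbr := (lieM n hn).lie_mem h3 h2
          rw [swap3 hx.1 (Ne.symm hdx) (Ne.symm hdy) hx.2 hy hdt
            (by rw [hlt, Nat.odd_iff]; omega)] at hbr
          exact half_mem hbr

theorem lieM_contains_products (n : ℕ) (hn : 3 ≤ n) (k : ℕ) (hk2 : 2 ≤ k) (hkn : k ≤ n)
    (hkmod : k % 4 = 2 ∨ k % 4 = 3) (j : Fin k → Fin n) (hj : Function.Injective j) :
    (List.ofFn (fun t : Fin k => cliffordGen n (j t))).prod ∈ lieM n hn ∨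
      (k = n ∧ n % 4 = 3) := by
  by_cases hexc : k = n ∧ n % 4 = 3
  · exact Or.inr hexc
  · left
    have heq : (List.ofFn (fun t : Fin k => cliffordGen n (j t))).prod = blade n (List.ofFn j) := by
      rw [blade, List.map_ofFn]
      rfl
    rw [heq]
    exact main_mem k (List.ofFn j) (List.nodup_ofFn.mpr hj) (List.length_ofFn (f := j)) hk2 hkn hkmod
      (fun h => by tauto)
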